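/- Let x_1, …, x_n ∈ ℝ^d be unit vectors satisfying |x_i^T x_j| ≤ δ for all i ≠ j, and let s_min be the minimum eigenvalue of Σ_{i=1}^n x_i x_i^T. Then (n−1) Σ_{i=1}^n x_i x_i^T − Σ_{i, j ∈ [n], i ≠ j} x_i x_i^T x_j x_j^T ⪰ (n−1)(1−δ) s_min · I; equivalently, for every unit vector u ∈ ℝ^d, (n−1) Σ_{i=1}^n (u^T x_i)^2 − Σ_{i ≠ j} (x_i^T x_j)(u^T x_i)(u^T x_j) ≥ (n−1)(1−δ) s_min. -/

import Mathlib

open Matrix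

theorem aux_sum_mulVec {ι : Type*} (s : Finset ι) (d : ℕ) (A : ι → Matrix (Fin d) (Fin d) ℝ)
    (v : Fin d → ℝ) : (∑ i ∈ s, A i) *ᵥ v = ∑ i ∈ s, (A i *ᵥ v) := by
  ext k
  simp [Matrix.mulVec, dotProduct, Finset.sum_apply, Matrix.sum_apply, Finset.sum_mul]
  rw [Finset.sum_comm]

theorem aux_dotProduct_sum {ι : Type*} (s : Finset ι) (d : ℕ) (v : Fin d → ℝ)
    (w : ι → Fin d → ℝ) : v ⬝ᵥ (∑ i ∈ s, w i) = ∑ i ∈ s, v ⬝ᵥ w i := by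
  simp [dotProduct, Finset.sum_apply, Finset.mul_sum]
  rw [Finset.sum_comm]

theorem aux_vmv_mulVec (d : ℕ) (x y v : Fin d → ℝ) :
    Matrix.vecMulVec x y *ᵥ v = (y ⬝ᵥ v) • x := by
  ext i
  simp only [Matrix.mulVec, Matrix.vecMulVec_apply, dotProduct, Pi.smul_apply, smul_eq_mul,
    Finset.sum_mul]
  exact Finset.sum_congr rfl (fun j _ => by ring)

theorem aux_qf_term (d : ℕ) (x y v : Fin d → ℝ) :
    v ⬝ᵥ ((Matrix.vecMulVec x x * Matrix.vecMulVec y y) *ᵥ v)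
      = (x ⬝ᵥ y) * (v ⬝ᵥ x) * (v ⬝ᵥ y) := by
  rw [← Matrix.mulVec_mulVec]
  simp only [aux_vmv_mulVec, dotProduct_smul, smul_dotProduct, smul_eq_mul, dotProduct_comm v x,
    dotProduct_comm v y]
  ring

theorem aux_sum_ite_ne (n : ℕ) (f : Fin n → Fin n → ℝ) :
    ∑ i : Fin n, ∑ j : Fin n, (if i ≠ j then f i j else 0)
      = (∑ i : Fin n, ∑ j : Fin n, f i j) - ∑ i : Fin n, f i i := by
  rw [← Finset.sum_sub_distrib]
  refine Finset.sum_congr rfl (fun i _ => ?_)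
  have h1 : ∀ j : Fin n, (if i ≠ j then f i j else 0) = f i j - (if i = j then f i j else 0) := by
    intro j; by_cases h : i = j <;> simp [h]
  rw [Finset.sum_congr rfl (fun j _ => h1 j), Finset.sum_sub_distrib, Finset.sum_ite_eq]
  simp

theorem aux_sub_smin_psd (d : ℕ) (H : Matrix (Fin d) (Fin d) ℝ) (hH : H.IsHermitian) :
    PosSemidef (H - (⨅ k, hH.eigenvalues k) • 1) := by
  set c := ⨅ k, hH.eigenvalues k with hc
  have hdiag : PosSemidef (diagonal (fun k => hH.eigenvalues k - c) : Matrix (Fin d) (Fin d) ℝ) :=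
    Matrix.posSemidef_diagonal_iff.mpr fun k =>
      sub_nonneg.mpr (ciInf_le (Finite.bddBelow_range _) k)
  have h2 := hdiag.mul_mul_conjTranspose_same (hH.eigenvectorUnitary : Matrix (Fin d) (Fin d) ℝ)
  have hd : (diagonal (fun k => hH.eigenvalues k - c) : Matrix (Fin d) (Fin d) ℝ)
      = diagonal hH.eigenvalues - c • 1 := by
    rw [smul_one_eq_diagonal, ← diagonal_sub]
  have hU : (hH.eigenvectorUnitary : Matrix (Fin d) (Fin d) ℝ)
      * star (hH.eigenvectorUnitary : Matrix (Fin d) (Fin d) ℝ) = 1 :=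
    Matrix.mem_unitaryGroup_iff.mp hH.eigenvectorUnitary.2
  have key : (hH.eigenvectorUnitary : Matrix (Fin d) (Fin d) ℝ)
      * diagonal (fun k => hH.eigenvalues k - c)
      * (hH.eigenvectorUnitary : Matrix (Fin d) (Fin d) ℝ)ᴴ = H - c • 1 := by
    rw [← Matrix.star_eq_conjTranspose, hd, Matrix.mul_sub, Matrix.sub_mul,
      mul_smul_comm, Matrix.mul_one, smul_mul_assoc, hU]
    congr 1
    conv_rhs => rw [hH.spectral_theorem]
    simp [RCLike.ofReal_real_eq_id]
  rw [← key]
  exact h2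

/-- For unit vectors x₁,…,x_n ∈ ℝ^d with |xᵢᵀxⱼ| ≤ δ for i ≠ j and s_min the
minimum eigenvalue of Σᵢ xᵢxᵢᵀ,
(n−1) Σᵢ xᵢxᵢᵀ − Σ_{i≠j} xᵢxᵢᵀxⱼxⱼᵀ ⪰ (n−1)(1−δ)s_min · I; equivalently, for every unit
vector u, (n−1) Σᵢ (uᵀxᵢ)² − Σ_{i≠j} (xᵢᵀxⱼ)(uᵀxᵢ)(uᵀxⱼ) ≥ (n−1)(1−δ)s_min. -/
theorem statement19 (n d : ℕ) (x : Fin n → Fin d → ℝ) (δ smin : ℝ)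
    (hunit : ∀ i, x i ⬝ᵥ x i = 1)
    (hδ : ∀ i j, i ≠ j → |x i ⬝ᵥ x j| ≤ δ)
    (hH : (∑ i : Fin n, Matrix.vecMulVec (x i) (x i)).IsHermitian)
    (hsmin : smin = ⨅ k, hH.eigenvalues k) :
    ((((n : ℝ) - 1) • ∑ i : Fin n, Matrix.vecMulVec (x i) (x i)
        - (∑ i : Fin n, ∑ j : Fin n,
            if i ≠ j then Matrix.vecMulVec (x i) (x i) * Matrix.vecMulVec (x j) (x j) else 0)
        - (((n : ℝ) - 1) * (1 - δ) * smin) • (1 : Matrix (Fin d) (Fin d) ℝ)).PosSemidef)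
    ∧ ∀ u : Fin d → ℝ, u ⬝ᵥ u = 1 →
        ((n : ℝ) - 1) * (1 - δ) * smin ≤
          ((n : ℝ) - 1) * ∑ i : Fin n, (u ⬝ᵥ x i) ^ 2
            - ∑ i : Fin n, ∑ j : Fin n,
                if i ≠ j then (x i ⬝ᵥ x j) * (u ⬝ᵥ x i) * (u ⬝ᵥ x j) else 0 := by
  have hstar : ∀ v : Fin d → ℝ, star v = v := fun v => funext fun i => rfl
  -- quadratic form of H
  have hqH : ∀ v : Fin d → ℝ,
      v ⬝ᵥ ((∑ i : Fin n, Matrix.vecMulVec (x i) (x i)) *ᵥ v)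
        = ∑ i : Fin n, (v ⬝ᵥ x i) ^ 2 := by
    intro v
    rw [aux_sum_mulVec, aux_dotProduct_sum]
    refine Finset.sum_congr rfl fun i _ => ?_
    rw [aux_vmv_mulVec, dotProduct_smul, smul_eq_mul, dotProduct_comm (x i) v]
    ring
  have hS0 : ∀ v : Fin d → ℝ, 0 ≤ ∑ i : Fin n, (v ⬝ᵥ x i) ^ 2 :=
    fun v => Finset.sum_nonneg fun i _ => sq_nonneg _
  have hHpsd : PosSemidef (∑ i : Fin n, Matrix.vecMulVec (x i) (x i)) :=
    PosSemidef.of_dotProduct_mulVec_nonneg hH fun v => by rw [hstar v, hqH v]; exact hS0 v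
  have hsmin0 : 0 ≤ smin := by
    rw [hsmin]
    exact Real.iInf_nonneg fun k => hHpsd.eigenvalues_nonneg k
  -- min-eigenvalue quadratic form bound
  have hF2 : ∀ v : Fin d → ℝ, smin * (v ⬝ᵥ v) ≤ ∑ i : Fin n, (v ⬝ᵥ x i) ^ 2 := by
    intro v
    have hP := (aux_sub_smin_psd d _ hH).dotProduct_mulVec_nonneg v
    rw [hstar v, Matrix.sub_mulVec, dotProduct_sub, Matrix.smul_mulVec,
      Matrix.one_mulVec, dotProduct_smul, smul_eq_mul, hqH v, ← hsmin] at hP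
    linarith
  have hvv0 : ∀ v : Fin d → ℝ, 0 ≤ v ⬝ᵥ v :=
    fun v => Finset.sum_nonneg fun i _ => mul_self_nonneg (v i)
  -- quadratic form of the cross-term matrix
  have hqC : ∀ v : Fin d → ℝ,
      v ⬝ᵥ ((∑ i : Fin n, ∑ j : Fin n,
          if i ≠ j then Matrix.vecMulVec (x i) (x i) * Matrix.vecMulVec (x j) (x j) else 0) *ᵥ v)
        = ∑ i : Fin n, ∑ j : Fin n,
            (if i ≠ j then (x i ⬝ᵥ x j) * (v ⬝ᵥ x i) * (v ⬝ᵥ x j) else 0) := by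
    intro v
    rw [aux_sum_mulVec, aux_dotProduct_sum]
    refine Finset.sum_congr rfl fun i _ => ?_
    rw [aux_sum_mulVec, aux_dotProduct_sum]
    refine Finset.sum_congr rfl fun j _ => ?_
    by_cases h : i = j
    · simp [h]
    · simp [h, aux_qf_term]
  -- the key scalar inequality, for every vector v
  have key : ∀ v : Fin d → ℝ,
      ((n : ℝ) - 1) * (1 - δ) * smin * (v ⬝ᵥ v) ≤
        ((n : ℝ) - 1) * ∑ i : Fin n, (v ⬝ᵥ x i) ^ 2
          - ∑ i : Fin n, ∑ j : Fin n,
              (if i ≠ j then (x i ⬝ᵥ x j) * (v ⬝ᵥ x i) * (v ⬝ᵥ x j) else 0) := by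
    intro v
    rcases Nat.lt_or_ge n 2 with hn | hn
    · -- degenerate cases n = 0, n = 1
      have hcross0 : ∑ i : Fin n, ∑ j : Fin n,
          (if i ≠ j then (x i ⬝ᵥ x j) * (v ⬝ᵥ x i) * (v ⬝ᵥ x j) else 0) = 0 := by
        refine Finset.sum_eq_zero fun i _ => Finset.sum_eq_zero fun j _ => ?_
        have : i = j := by omega
        simp [this]
      rw [hcross0, sub_zero]
      rcases Nat.lt_or_ge n 1 with h1 | h1
      · -- n = 0
        have hn0 : n = 0 := by omega
        subst hn0
        have hS : ∑ i : Fin 0, (v ⬝ᵥ x i) ^ 2 = 0 := by simp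
        have h : smin * (v ⬝ᵥ v) = 0 :=
          le_antisymm (hS ▸ hF2 v) (mul_nonneg hsmin0 (hvv0 v))
        rw [hS]
        have h3 : δ * (smin * (v ⬝ᵥ v)) = 0 := by rw [h]; ring
        have h4 : smin * (v ⬝ᵥ v) = 0 := h
        push_cast
        nlinarith [h3, h4]
      · -- n = 1
        have hn1 : n = 1 := by omega
        subst hn1
        have hz : ((1:ℕ):ℝ) - 1 = 0 := by norm_num
        rw [hz, zero_mul, zero_mul, zero_mul, zero_mul]
    · -- main case n ≥ 2
      have i0 : Fin n := ⟨0, by omega⟩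
      have i1 : Fin n := ⟨1, by omega⟩
      have hne : (⟨0, by omega⟩ : Fin n) ≠ ⟨1, by omega⟩ := by
        intro h; simpa using congrArg Fin.val h
      have hδ0 : 0 ≤ δ := le_trans (abs_nonneg _) (hδ _ _ hne)
      set δ' := min δ 1 with hδ'def
      have hδ'0 : 0 ≤ δ' := le_min hδ0 zero_le_one
      have hδ'δ : δ' ≤ δ := min_le_left _ _
      have hδ'1 : δ' ≤ 1 := min_le_right _ _
      have hCS : ∀ i j, i ≠ j → |x i ⬝ᵥ x j| ≤ δ' := by
        intro i j hij
        refine le_min (hδ i j hij) ?_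
        have h2 : (∑ k : Fin d, x i k * x j k) ^ 2
            ≤ (∑ k : Fin d, x i k ^ 2) * ∑ k : Fin d, x j k ^ 2 :=
          Finset.sum_mul_sq_le_sq_mul_sq _ _ _
        have hui : ∑ k : Fin d, x i k ^ 2 = 1 := by
          simpa [pow_two, dotProduct] using hunit i
        have huj : ∑ k : Fin d, x j k ^ 2 = 1 := by
          simpa [pow_two, dotProduct] using hunit j
        rw [hui, huj, one_mul] at h2
        have h3 : (x i ⬝ᵥ x j) ^ 2 ≤ 1 := h2
        nlinarith [sq_abs (x i ⬝ᵥ x j), abs_nonneg (x i ⬝ᵥ x j),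
          sq_nonneg (|x i ⬝ᵥ x j| - 1)]
      have hterm : ∀ i j : Fin n,
          (if i ≠ j then (x i ⬝ᵥ x j) * (v ⬝ᵥ x i) * (v ⬝ᵥ x j) else 0)
            ≤ (if i ≠ j then δ' * (((v ⬝ᵥ x i) ^ 2 + (v ⬝ᵥ x j) ^ 2) / 2) else 0) := by
        intro i j
        by_cases h : i = j
        · simp [h]
        · simp only [h, ne_eq, not_false_eq_true, if_true, if_pos]
          have hcc := abs_le.mp (hCS i j h)
          nlinarith [sq_nonneg ((v ⬝ᵥ x i) - (v ⬝ᵥ x j)), sq_nonneg ((v ⬝ᵥ x i) + (v ⬝ᵥ x j)),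
            hcc.1, hcc.2, hδ'0]
      have hcb : ∑ i : Fin n, ∑ j : Fin n,
            (if i ≠ j then (x i ⬝ᵥ x j) * (v ⬝ᵥ x i) * (v ⬝ᵥ x j) else 0)
          ≤ ∑ i : Fin n, ∑ j : Fin n,
            (if i ≠ j then δ' * (((v ⬝ᵥ x i) ^ 2 + (v ⬝ᵥ x j) ^ 2) / 2) else 0) :=
        Finset.sum_le_sum fun i _ => Finset.sum_le_sum fun j _ => hterm i j
      have hsum : ∑ i : Fin n, ∑ j : Fin n,
            (if i ≠ j then δ' * (((v ⬝ᵥ x i) ^ 2 + (v ⬝ᵥ x j) ^ 2) / 2) else 0)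
          = δ' * ((n : ℝ) - 1) * ∑ i : Fin n, (v ⬝ᵥ x i) ^ 2 := by
        rw [aux_sum_ite_ne]
        simp only [mul_add, add_div, mul_div_assoc, Finset.sum_add_distrib, Finset.sum_const,
          Finset.card_univ, Fintype.card_fin, nsmul_eq_mul, ← Finset.sum_mul, ← Finset.mul_sum,
          ← Finset.sum_div]
        ring
      have hn1 : (1:ℝ) ≤ (n:ℝ) - 1 := by
        have : (2:ℝ) ≤ (n:ℝ) := by exact_mod_cast hn
        linarith
      have hFv := hF2 v
      have c1 : ((n : ℝ) - 1) * (1 - δ) * smin * (v ⬝ᵥ v)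
          ≤ ((n : ℝ) - 1) * (1 - δ') * (smin * (v ⬝ᵥ v)) := by
        have h := mul_nonneg (mul_nonneg (by linarith : (0:ℝ) ≤ (n:ℝ) - 1)
          (by linarith : (0:ℝ) ≤ δ - δ')) (mul_nonneg hsmin0 (hvv0 v))
        nlinarith [h]
      have c2 : ((n : ℝ) - 1) * (1 - δ') * (smin * (v ⬝ᵥ v))
          ≤ ((n : ℝ) - 1) * (1 - δ') * ∑ i : Fin n, (v ⬝ᵥ x i) ^ 2 :=
        mul_le_mul_of_nonneg_left hFv
          (mul_nonneg (by linarith) (by linarith))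
      nlinarith [hcb, hsum ▸ hcb, c1, c2]
  constructor
  · -- positive semidefiniteness
    refine Matrix.posSemidef_iff_dotProduct_mulVec.mpr ⟨?_, ?_⟩
    · -- Hermitian
      have hvmvT : ∀ a b : Fin d → ℝ, (Matrix.vecMulVec a b)ᴴ = Matrix.vecMulVec b a := by
        intro a b
        ext i j
        simp [Matrix.vecMulVec_apply, Matrix.conjTranspose_apply, mul_comm]
      have hCh : (∑ i : Fin n, ∑ j : Fin n,
          if i ≠ j then Matrix.vecMulVec (x i) (x i) * Matrix.vecMulVec (x j) (x j) else 0).IsHermitian := by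
        show Matrix.conjTranspose _ = _
        rw [Matrix.conjTranspose_sum]
        simp only [Matrix.conjTranspose_sum, apply_ite Matrix.conjTranspose,
          Matrix.conjTranspose_zero, Matrix.conjTranspose_mul, hvmvT]
        rw [Finset.sum_comm]
        exact Finset.sum_congr rfl fun i _ => Finset.sum_congr rfl fun j _ =>
          if_congr ne_comm rfl rfl
      show Matrix.conjTranspose _ = _
      simp only [Matrix.conjTranspose_sub, Matrix.conjTranspose_smul, Matrix.conjTranspose_one,
        star_trivial, hH.eq, hCh.eq]
    · intro v
      rw [hstar v, Matrix.sub_mulVec, Matrix.sub_mulVec, dotProduct_sub, dotProduct_sub,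
        Matrix.smul_mulVec, Matrix.smul_mulVec, Matrix.one_mulVec,
        dotProduct_smul, dotProduct_smul, smul_eq_mul, smul_eq_mul, hqH v, hqC v]
      have := key v
      linarith
  · intro u hu
    have := key u
    rw [hu, mul_one] at this
    exact this
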